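/- (DPNR combined guarantee, Algorithm 2.) Let f : (Fin d → ℝ) → (Fin k → ℝ) satisfy the ℓ₁-sensitivity bound: for all x, x' : Fin d → ℝ agreeing on all but at most one coordinate, ∑_j |f(x)_j − f(x')_j| ≤ Δ, with Δ > 0. Let ε > 0, b = Δ/ε, and μ ∈ [0,1]. Consider the mechanism that, on input x, first samples a mask I : Fin d → {0,1} with i.i.d. coordinates satisfying P[I_j = 0] = μ, then outputs f(x ⊙ I) + r, where r has i.i.d. coordinates drawn from Lap(b) independently of I. This mechanism is ε'-differentially private with respect to word-level adjacency, where ε' = ln((1−μ)·exp(ε) + μ): for all x, x' agreeing on all but at most one coordinate and all measurable S ⊆ (Fin k → ℝ), the output distribution on input x assigns S at most exp(ε') times the mass assigned on input x'. -/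

import Mathlib

open MeasureTheory

/-- The Laplace distribution `Lap(b)` on `ℝ` with scale parameter `b`:
the measure with density `t ↦ (1/(2b))·exp(−|t|/b)` w.r.t. Lebesgue measure. -/
noncomputable def Lap (b : ℝ) : Measure ℝ :=
  (volume : Measure ℝ).withDensity
    fun t => ENNReal.ofReal ((1 / (2 * b)) * Real.exp (-|t| / b))

/-- The distribution on `Bool` of a single mask bit with dropout rate `μ`:
the bit is `0` (`false`) with probability `μ` and `1` (`true`) with
probability `1 − μ`. -/
noncomputable def maskBit (μ : ℝ) : Measure Bool :=
  (ENNReal.ofReal μ) • Measure.dirac false + (ENNReal.ofReal (1 - μ)) • Measure.dirac true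

/-- The distribution of the random mask `I : Fin d → {0,1}` with i.i.d.
coordinates, each `0` with probability `μ`. -/
noncomputable def maskLaw (d : ℕ) (μ : ℝ) : Measure (Fin d → Bool) :=
  Measure.pi fun _ : Fin d => maskBit μ

/-- The input `x` masked by `I`: coordinatewise, `(x ⊙ I) j = x j · I j`,
identifying the mask bit with the real numbers `0` and `1`. -/
def maskedInput {d : ℕ} (x : Fin d → ℝ) (I : Fin d → Bool) : Fin d → ℝ :=
  fun j => if I j then x j else 0

open scoped ENNReal

/-- The Laplace density, as an `ℝ≥0∞`-valued function. -/
noncomputable def LapDens (b : ℝ) (t : ℝ) : ℝ≥0∞ :=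
  ENNReal.ofReal ((1 / (2 * b)) * Real.exp (-|t| / b))

lemma measurable_LapDens (b : ℝ) : Measurable (LapDens b) := by
  unfold LapDens; fun_prop

instance (b : ℝ) : SigmaFinite (Lap b) := by unfold Lap; infer_instance

instance (μ : ℝ) : IsFiniteMeasure (maskBit μ) := by
  constructor
  simp [maskBit]

/-- Fubini for lower integrals of products over `Fin n → ℝ`. -/
theorem lintegral_fin_prod : ∀ {n : ℕ} (g : Fin n → ℝ → ℝ≥0∞), (∀ i, Measurable (g i)) →
    ∫⁻ t : Fin n → ℝ, ∏ i, g i (t i) ∂(Measure.pi fun _ => (volume : Measure ℝ))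
      = ∏ i, ∫⁻ u, g i u ∂volume := by
  intro n
  induction n with
  | zero =>
    intro g hg
    simp [Measure.pi_of_empty]
  | succ n ih =>
    intro g hg
    have hmeas : Measurable fun t : Fin (n+1) → ℝ => ∏ i, g i (t i) :=
      Finset.measurable_prod _ fun i _ => (hg i).comp (measurable_pi_apply i)
    have A := (measurePreserving_piFinSuccAbove (fun _ : Fin (n+1) => (volume : Measure ℝ)) 0).symm
    rw [← A.lintegral_comp hmeas]
    have key : ∀ p : ℝ × (Fin n → ℝ),
        (∏ i, g i (((MeasurableEquiv.piFinSuccAbove (fun _ : Fin (n+1) => ℝ) 0).symm p) i))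
          = g 0 p.1 * ∏ j : Fin n, g j.succ (p.2 j) := by
      intro p
      simp [MeasurableEquiv.piFinSuccAbove_symm_apply, Fin.insertNth_zero,
        Fin.prod_univ_succ]
    simp_rw [key]
    rw [lintegral_prod_mul (f := g 0) (g := fun y : Fin n → ℝ => ∏ j : Fin n, g j.succ (y j))
      (hg 0).aemeasurable
      (Finset.measurable_prod _ fun j _ => (hg j.succ).comp (measurable_pi_apply j)).aemeasurable,
      ih (fun j => g j.succ) (fun j => hg j.succ), Fin.prod_univ_succ]

/-- The product of Laplace measures is the measure with the product density. -/
lemma Lap_pi_eq (k : ℕ) (b : ℝ) :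
    Measure.pi (fun _ : Fin k => Lap b)
      = (volume : Measure (Fin k → ℝ)).withDensity (fun t => ∏ i, LapDens b (t i)) := by
  refine Measure.pi_eq fun s hs => ?_
  rw [withDensity_apply _ (MeasurableSet.univ_pi hs),
    ← lintegral_indicator (MeasurableSet.univ_pi hs)]
  have hpt : ∀ t : Fin k → ℝ,
      (Set.pi Set.univ s).indicator (fun t => ∏ i, LapDens b (t i)) t
        = ∏ i, (s i).indicator (LapDens b) (t i) := by
    intro t
    by_cases ht : t ∈ Set.pi Set.univ s
    · rw [Set.indicator_of_mem ht]
      exact Finset.prod_congr rfl fun i _ =>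
        (Set.indicator_of_mem (ht i (Set.mem_univ i)) _).symm
    · rw [Set.indicator_of_notMem ht]
      have : ∃ i, t i ∉ s i := by
        by_contra h
        push_neg at h
        exact ht fun i _ => h i
      obtain ⟨i, hi⟩ := this
      exact (Finset.prod_eq_zero (Finset.mem_univ i)
        (Set.indicator_of_notMem hi _)).symm
  simp_rw [hpt]
  rw [volume_pi, lintegral_fin_prod _ (fun i => (measurable_LapDens b).indicator (hs i))]
  refine Finset.prod_congr rfl fun i _ => ?_
  rw [lintegral_indicator (hs i), show Lap b = volume.withDensity (LapDens b) from rfl,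
    withDensity_apply _ (hs i)]

/-- The shifted product Laplace measure, evaluated on a set. -/
lemma map_translate (k : ℕ) (b : ℝ) (v : Fin k → ℝ) {S : Set (Fin k → ℝ)}
    (hS : MeasurableSet S) :
    Measure.map (fun r => v + r) (Measure.pi fun _ : Fin k => Lap b) S
      = ∫⁻ u in S, ∏ i, LapDens b (u i - v i) ∂volume := by
  rw [Lap_pi_eq, Measure.map_apply (measurable_const_add v) hS,
    withDensity_apply _ ((measurable_const_add v) hS)]
  have hmp : MeasurePreserving (fun t : Fin k → ℝ => v + t) volume volume :=
    measurePreserving_add_left volume v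
  rw [← hmp.setLIntegral_comp_preimage_emb (MeasurableEquiv.addLeft v).measurableEmbedding
    (fun u => ∏ i, LapDens b (u i - v i)) S]
  simp [add_sub_cancel_left]

/-- The Laplace mechanism guarantee for a single pair of vectors at
`ℓ¹`-distance at most `Δ`. -/
lemma lap_mech_le {k : ℕ} {Δ ε : ℝ} (hΔ : 0 < Δ) (hε : 0 < ε)
    (v w : Fin k → ℝ) (hvw : ∑ j, |v j - w j| ≤ Δ)
    {S : Set (Fin k → ℝ)} (hS : MeasurableSet S) :
    Measure.map (fun r => v + r) (Measure.pi fun _ : Fin k => Lap (Δ / ε)) S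
      ≤ ENNReal.ofReal (Real.exp ε)
        * Measure.map (fun r => w + r) (Measure.pi fun _ : Fin k => Lap (Δ / ε)) S := by
  set b := Δ / ε with hb
  have hb0 : 0 < b := div_pos hΔ hε
  have hΔb : Δ / b = ε := by field_simp [hb]; rw [hb, div_mul_cancel₀ _ hε.ne']
  rw [map_translate _ _ _ hS, map_translate _ _ _ hS, ← lintegral_const_mul' _ _
    (by exact ENNReal.ofReal_ne_top)]
  refine lintegral_mono fun u => ?_
  have hc : (0:ℝ) ≤ 1 / (2 * b) := by positivity
  have hreal : ∏ i, (1 / (2 * b)) * Real.exp (-|u i - v i| / b)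
      ≤ Real.exp ε * ∏ i, (1 / (2 * b)) * Real.exp (-|u i - w i| / b) := by
    rw [Finset.prod_mul_distrib, Finset.prod_mul_distrib, ← Real.exp_sum, ← Real.exp_sum,
      mul_comm (Real.exp ε), mul_assoc, ← Real.exp_add]
    refine mul_le_mul_of_nonneg_left ?_ (Finset.prod_nonneg fun _ _ => hc)
    refine Real.exp_le_exp.mpr ?_
    have h1 : ∀ i : Fin k, -|u i - v i| / b ≤ |v i - w i| / b + -|u i - w i| / b := by
      intro i
      rw [← add_div, div_le_div_iff_of_pos_right hb0]
      have := abs_sub_abs_le_abs_sub (u i - w i) (u i - v i)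
      have h2 : (u i - w i) - (u i - v i) = v i - w i := by ring
      rw [h2] at this
      linarith
    calc ∑ i, -|u i - v i| / b ≤ ∑ i, (|v i - w i| / b + -|u i - w i| / b) :=
          Finset.sum_le_sum fun i _ => h1 i
      _ = (∑ i, |v i - w i|) / b + ∑ i, -|u i - w i| / b := by
          rw [Finset.sum_add_distrib, Finset.sum_div]
      _ ≤ ε + ∑ i, -|u i - w i| / b := by
          have h3 : (∑ i, |v i - w i|) / b ≤ Δ / b := by gcongr
          rw [← hΔb]
          linarith
      _ = ∑ i, -|u i - w i| / b + ε := add_comm _ _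
  calc ∏ i, LapDens b (u i - v i)
      = ENNReal.ofReal (∏ i, (1 / (2 * b)) * Real.exp (-|u i - v i| / b)) := by
        rw [ENNReal.ofReal_prod_of_nonneg (fun i _ => by positivity)]; rfl
    _ ≤ ENNReal.ofReal (Real.exp ε * ∏ i, (1 / (2 * b)) * Real.exp (-|u i - w i| / b)) :=
        ENNReal.ofReal_le_ofReal hreal
    _ = ENNReal.ofReal (Real.exp ε) * ∏ i, LapDens b (u i - w i) := by
        rw [ENNReal.ofReal_mul (Real.exp_nonneg ε),
          ENNReal.ofReal_prod_of_nonneg (fun i _ => by positivity)]; rfl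

lemma maskBit_false (μ : ℝ) : maskBit μ {false} = ENNReal.ofReal μ := by
  simp [maskBit, Measure.dirac_apply']

lemma maskBit_true (μ : ℝ) : maskBit μ {true} = ENNReal.ofReal (1 - μ) := by
  simp [maskBit, Measure.dirac_apply']

lemma maskLaw_singleton (d : ℕ) (μ : ℝ) (I : Fin d → Bool) :
    maskLaw d μ {I} = ∏ j, maskBit μ {I j} := by
  rw [show ({I} : Set (Fin d → Bool)) = Set.pi Set.univ (fun j => {I j}) by
    ext J; simp [funext_iff, Set.mem_pi, eq_comm]]
  exact Measure.pi_pi _ _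

lemma lintegral_mask (d : ℕ) (μ : ℝ) (g : (Fin d → Bool) → ℝ≥0∞) :
    ∫⁻ I, g I ∂(maskLaw d μ) = ∑ I : Fin d → Bool, maskLaw d μ {I} * g I := by
  rw [lintegral_countable' g, tsum_fintype]
  exact Finset.sum_congr rfl fun I _ => mul_comm _ _

/-- The key scalar inequality behind the DPNR bound. -/
lemma key_ineq (p q E a s t : ℝ≥0∞) (hpq : p + q = 1) (hE : 1 ≤ E)
    (h1 : s ≤ E * a) (h2 : s ≤ E * t) :
    q * s + p * a ≤ (q * E + p) * (q * t + p * a) := by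
  rcases le_total a t with h | h
  · calc q * s + p * a ≤ q * (E * a) + p * a := by gcongr
      _ = (p + q) * (q * (E * a) + p * a) := by rw [hpq, one_mul]
      _ = (q * E + p) * (q * a + p * a) := by ring
      _ ≤ (q * E + p) * (q * t + p * a) := by gcongr
  · have key2 : E * t + a ≤ t + E * a := by
      obtain ⟨e, rfl⟩ : ∃ e, E = 1 + e :=
        ⟨E - 1, by rw [add_comm]; exact (tsub_add_cancel_of_le hE).symm⟩
      calc (1 + e) * t + a = t + (e * t + a) := by ring
        _ ≤ t + (e * a + a) := by gcongr
        _ = t + (1 + e) * a := by ring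
    calc q * s + p * a ≤ q * (E * t) + p * a := by gcongr
      _ = (p + q) * (q * (E * t) + p * a) := by rw [hpq, one_mul]
      _ = p * q * (E * t + a) + (q * (q * (E * t)) + p * (p * a)) := by ring
      _ ≤ p * q * (t + E * a) + (q * (q * (E * t)) + p * (p * a))  := by gcongr
      _ = (q * E + p) * (q * t + p * a) := by ring

/-- Splitting a sum over masks according to the bit at position `i`. -/
lemma sum_split (d : ℕ) (i : Fin d) (F : (Fin d → Bool) → ℝ≥0∞) :
    ∑ I : Fin d → Bool, F I
      = ∑ I ∈ Finset.univ.filter (fun I => I i = true),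
          (F I + F (Function.update I i false)) := by
  rw [Finset.sum_add_distrib,
    ← Finset.sum_filter_add_sum_filter_not Finset.univ (fun I => I i = true) F]
  congr 1
  refine Finset.sum_bij' (fun I _ => Function.update I i true)
    (fun I _ => Function.update I i false) ?_ ?_ ?_ ?_ ?_
  · intro I hI; simp
  · intro I hI; simp
  · intro I hI
    simp only [Finset.mem_filter, Finset.mem_univ, true_and, Bool.not_eq_true] at hI
    funext j
    rcases eq_or_ne j i with rfl | hj
    · simp [hI]
    · simp [hj]
  · intro I hI
    simp only [Finset.mem_filter, Finset.mem_univ, true_and] at hI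
    funext j
    rcases eq_or_ne j i with rfl | hj
    · simp [hI]
    · simp [hj]
  · intro I hI
    simp only [Finset.mem_filter, Finset.mem_univ, true_and, Bool.not_eq_true] at hI
    congr 1
    funext j
    rcases eq_or_ne j i with rfl | hj
    · simp [hI]
    · simp [hj]

/-- DPNR combined guarantee (Algorithm 2). Suppose `f` has ℓ₁-sensitivity at
most `Δ > 0` over word-level adjacent inputs, `ε > 0`, `b = Δ/ε`, `μ ∈ [0,1]`.
The mechanism that on input `x` samples a mask `I` (i.i.d. coordinates,
`P[I_j = 0] = μ`), then outputs `f(x ⊙ I) + r` with the coordinates of `r`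
i.i.d. `Lap(b)` independent of `I`, is `ε'`-differentially private w.r.t.
word-level adjacency, where `ε' = ln((1−μ)·exp(ε) + μ)`. -/
theorem dpnr_combined_guarantee (d k : ℕ)
    (f : (Fin d → ℝ) → (Fin k → ℝ)) (Δ ε μ : ℝ)
    (hΔ : 0 < Δ) (hε : 0 < ε) (hμ0 : 0 ≤ μ) (hμ1 : μ ≤ 1)
    (hsens : ∀ x x' : Fin d → ℝ, (∃ i, ∀ j, j ≠ i → x j = x' j) →
      ∑ j, |f x j - f x' j| ≤ Δ)
    (x x' : Fin d → ℝ) (hadj : ∃ i, ∀ j, j ≠ i → x j = x' j)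
    (S : Set (Fin k → ℝ)) (hS : MeasurableSet S) :
    (∫⁻ I : Fin d → Bool,
        Measure.map (fun r => f (maskedInput x I) + r)
          (Measure.pi fun _ : Fin k => Lap (Δ / ε)) S ∂(maskLaw d μ)) ≤
      ENNReal.ofReal (Real.exp (Real.log ((1 - μ) * Real.exp ε + μ))) *
        ∫⁻ I : Fin d → Bool,
          Measure.map (fun r => f (maskedInput x' I) + r)
            (Measure.pi fun _ : Fin k => Lap (Δ / ε)) S ∂(maskLaw d μ) := by
  obtain ⟨i, hi⟩ := hadj
  set p : ℝ≥0∞ := ENNReal.ofReal μ with hp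
  set q : ℝ≥0∞ := ENNReal.ofReal (1 - μ) with hq
  set E : ℝ≥0∞ := ENNReal.ofReal (Real.exp ε) with hE
  have hpq : p + q = 1 := by
    rw [hp, hq, ← ENNReal.ofReal_add hμ0 (by linarith), add_sub_cancel, ENNReal.ofReal_one]
  have hE1 : 1 ≤ E := by
    rw [hE, ← ENNReal.ofReal_one]
    exact ENNReal.ofReal_le_ofReal (Real.one_le_exp hε.le)
  have hCpos : 0 < (1 - μ) * Real.exp ε + μ := by
    nlinarith [Real.exp_pos ε, Real.one_le_exp (le_of_lt hε)]
  have hc : ENNReal.ofReal (Real.exp (Real.log ((1 - μ) * Real.exp ε + μ))) = q * E + p := by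
    rw [Real.exp_log hCpos, ENNReal.ofReal_add (mul_nonneg (by linarith) (Real.exp_nonneg ε)) hμ0,
      ENNReal.ofReal_mul (by linarith)]
  set c : ℝ≥0∞ := q * E + p with hcc
  set A : (Fin d → Bool) → ℝ≥0∞ := fun I =>
    Measure.map (fun r => f (maskedInput x I) + r)
      (Measure.pi fun _ : Fin k => Lap (Δ / ε)) S with hA
  set B : (Fin d → Bool) → ℝ≥0∞ := fun I =>
    Measure.map (fun r => f (maskedInput x' I) + r)
      (Measure.pi fun _ : Fin k => Lap (Δ / ε)) S with hB
  rw [hc, lintegral_mask, lintegral_mask,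
    sum_split d i (fun I => maskLaw d μ {I} * A I),
    sum_split d i (fun I => maskLaw d μ {I} * B I), Finset.mul_sum]
  refine Finset.sum_le_sum fun I hI => ?_
  simp only [Finset.mem_filter, Finset.mem_univ, true_and] at hI
  -- weights
  set w : ℝ≥0∞ := ∏ j ∈ Finset.univ.erase i, maskBit μ {I j} with hw
  have hwI : maskLaw d μ {I} = q * w := by
    rw [maskLaw_singleton, ← Finset.mul_prod_erase _ _ (Finset.mem_univ i), hI, maskBit_true]
  have hwI' : maskLaw d μ {Function.update I i false} = p * w := by
    rw [maskLaw_singleton, ← Finset.mul_prod_erase _ _ (Finset.mem_univ i),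
      Function.update_self, maskBit_false]
    congr 1
    refine Finset.prod_congr rfl fun j hj => ?_
    rw [Function.update_of_ne (Finset.mem_erase.mp hj).1]
  -- masked inputs coincide when the bit i is dropped
  have hsame : maskedInput x (Function.update I i false)
      = maskedInput x' (Function.update I i false) := by
    funext j
    rcases eq_or_ne j i with rfl | hj
    · simp [maskedInput]
    · simp only [maskedInput, Function.update_of_ne hj]
      rcases Bool.eq_false_or_eq_true (I j) with h | h <;> simp [h, hi j hj]
  -- adjacency facts
  have hadj1 : ∑ j, |f (maskedInput x I) j - f (maskedInput x' I) j| ≤ Δ := by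
    refine hsens _ _ ⟨i, fun j hj => ?_⟩
    simp [maskedInput, hi j hj]
  have hadj2 : ∑ j, |f (maskedInput x I) j
      - f (maskedInput x' (Function.update I i false)) j| ≤ Δ := by
    refine hsens _ _ ⟨i, fun j hj => ?_⟩
    simp only [maskedInput, Function.update_of_ne hj]
    rcases Bool.eq_false_or_eq_true (I j) with h | h <;> simp [h, hi j hj]
  -- the three quantities
  have h1 : A I ≤ E * B (Function.update I i false) :=
    lap_mech_le hΔ hε _ _ hadj2 hS
  have h2 : A I ≤ E * B I := lap_mech_le hΔ hε _ _ hadj1 hS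
  have hAB : A (Function.update I i false) = B (Function.update I i false) := by
    rw [hA, hB]; simp only [hsame]
  have hkey := key_ineq p q E (B (Function.update I i false)) (A I) (B I) hpq hE1 h1 h2
  calc maskLaw d μ {I} * A I + maskLaw d μ {Function.update I i false}
        * A (Function.update I i false)
      = w * (q * A I + p * B (Function.update I i false)) := by
        rw [hwI, hwI', hAB]; ring
    _ ≤ w * ((q * E + p) * (q * B I + p * B (Function.update I i false))) :=
        mul_le_mul_right hkey w
    _ = c * (maskLaw d μ {I} * B I + maskLaw d μ {Function.update I i false}
        * B (Function.update I i false)) := by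
        rw [hwI, hwI', hcc]; ring
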